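/- arXiv:1405.5020 — 2 statements merged into one kernel-verified Lean document; each statement's English description precedes it below -/
import Mathlib

section
/- The statistics M_n and F_n coincide: for any vectors X₁,...,X_n and μ₀ in ℝᵈ, (X̄_n − μ₀)ᵀ(X̄_n − μ₀) − n⁻¹·tr( (n−1)⁻¹ Σᵢ (Xᵢ − X̄_n)(Xᵢ − X̄_n)ᵀ ) = (n(n−1))⁻¹ Σ_{i≠j} (Xᵢ − μ₀)ᵀ(Xⱼ − μ₀). -/
open Finset

lemma my_sum_dotProduct {m ι : Type*} [Fintype m] (s : Finset ι) (f : ι → m → ℝ) (v : m → ℝ) :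
    dotProduct (∑ i ∈ s, f i) v = ∑ i ∈ s, dotProduct (f i) v := by
  simp [dotProduct, Finset.sum_apply, Finset.sum_mul]
  exact Finset.sum_comm

lemma my_dotProduct_sum {m ι : Type*} [Fintype m] (s : Finset ι) (f : ι → m → ℝ) (v : m → ℝ) :
    dotProduct v (∑ i ∈ s, f i) = ∑ i ∈ s, dotProduct v (f i) := by
  simp [dotProduct, Finset.sum_apply, Finset.mul_sum]
  exact Finset.sum_comm

lemma my_trace_vecMulVec {m : Type*} [Fintype m] (v w : m → ℝ) :
    Matrix.trace (Matrix.vecMulVec v w) = dotProduct v w := by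
  simp [Matrix.trace, Matrix.diag, Matrix.vecMulVec_apply, dotProduct]

lemma my_expand {n d : ℕ} (Y : Fin n → Fin d → ℝ) (c : ℝ) (i : Fin n) :
    dotProduct (Y i - c • ∑ k, Y k) (Y i - c • ∑ k, Y k)
      = dotProduct (Y i) (Y i) - c * ∑ j, dotProduct (Y i) (Y j)
        - c * ∑ j, dotProduct (Y j) (Y i)
        + c * (c * ∑ j, ∑ k, dotProduct (Y j) (Y k)) := by
  rw [sub_dotProduct, dotProduct_sub, dotProduct_sub,
    smul_dotProduct, smul_dotProduct, dotProduct_smul,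
    dotProduct_smul, my_sum_dotProduct]
  simp only [my_dotProduct_sum, my_sum_dotProduct, smul_eq_mul]
  ring_nf
  rw [Finset.sum_comm]

theorem Mn_eq_Fn (n d : ℕ) (hn : 2 ≤ n) (X : Fin n → Fin d → ℝ) (μ₀ : Fin d → ℝ) :
    dotProduct ((n : ℝ)⁻¹ • ∑ i, X i - μ₀) ((n : ℝ)⁻¹ • ∑ i, X i - μ₀)
      - (n : ℝ)⁻¹ * Matrix.trace (((n : ℝ) - 1)⁻¹ •
          ∑ i, Matrix.vecMulVec (X i - (n : ℝ)⁻¹ • ∑ k, X k) (X i - (n : ℝ)⁻¹ • ∑ k, X k))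
    = ((n : ℝ) * ((n : ℝ) - 1))⁻¹ *
        ∑ i, ∑ j ∈ univ.filter (fun j => j ≠ i),
          dotProduct (X i - μ₀) (X j - μ₀) := by
  have hn0 : (n : ℝ) ≠ 0 := by positivity
  have hn1 : (n : ℝ) - 1 ≠ 0 := by
    have : (2 : ℝ) ≤ n := by exact_mod_cast hn
    nlinarith
  set Y : Fin n → Fin d → ℝ := fun i => X i - μ₀ with hY
  set g : Fin n → Fin n → ℝ := fun i j => dotProduct (Y i) (Y j) with hg
  set S : ℝ := ∑ i, ∑ j, g i j with hS
  set T : ℝ := ∑ i, g i i with hT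
  -- mean deviation
  have hmean : (n : ℝ)⁻¹ • ∑ i, X i - μ₀ = (n : ℝ)⁻¹ • ∑ i, Y i := by
    have h : ∑ i, Y i = (∑ i, X i) - (n : ℝ) • μ₀ := by
      simp only [hY, Finset.sum_sub_distrib]
      congr 1
      ext x
      simp [Finset.sum_apply, mul_comm]
    rw [h, smul_sub, smul_smul, inv_mul_cancel₀ hn0, one_smul]
  -- step 1
  have h1 : dotProduct ((n : ℝ)⁻¹ • ∑ i, X i - μ₀) ((n : ℝ)⁻¹ • ∑ i, X i - μ₀)
      = (n : ℝ)⁻¹ * (n : ℝ)⁻¹ * S := by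
    rw [hmean, smul_dotProduct, dotProduct_smul, my_sum_dotProduct]
    simp only [my_dotProduct_sum]
    simp [hS, hg, smul_eq_mul, Finset.mul_sum, mul_assoc]
  have hdev : ∀ i, X i - (n : ℝ)⁻¹ • ∑ k, X k = Y i - (n : ℝ)⁻¹ • ∑ k, Y k := by
    intro i
    rw [← hmean]
    simp only [hY]
    abel
  have hZ : ∀ i, dotProduct (Y i - (n : ℝ)⁻¹ • ∑ k, Y k) (Y i - (n : ℝ)⁻¹ • ∑ k, Y k)
      = g i i - (n : ℝ)⁻¹ * ∑ j, g i j - (n : ℝ)⁻¹ * ∑ j, g j i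
        + (n : ℝ)⁻¹ * ((n : ℝ)⁻¹ * S) := by
    intro i
    rw [my_expand Y ((n : ℝ)⁻¹) i, hS]
  -- step 2
  have h2 : Matrix.trace (((n : ℝ) - 1)⁻¹ •
        ∑ i, Matrix.vecMulVec (X i - (n : ℝ)⁻¹ • ∑ k, X k) (X i - (n : ℝ)⁻¹ • ∑ k, X k))
      = ((n : ℝ) - 1)⁻¹ * (T - (n : ℝ)⁻¹ * S) := by
    rw [Matrix.trace_smul, Matrix.trace_sum]
    simp only [my_trace_vecMulVec, hdev, hZ, smul_eq_mul]
    congr 1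
    have hswap : ∑ i, ∑ j, g j i = S := by rw [hS]; exact Finset.sum_comm
    rw [Finset.sum_add_distrib, Finset.sum_sub_distrib, Finset.sum_sub_distrib,
      ← Finset.mul_sum, ← Finset.mul_sum, hswap, ← hS, ← hT, Finset.sum_const,
      Finset.card_univ, Fintype.card_fin, nsmul_eq_mul]
    field_simp
    ring
  -- step 3
  have h3 : ∑ i, ∑ j ∈ univ.filter (fun j => j ≠ i),
        dotProduct (X i - μ₀) (X j - μ₀) = S - T := by
    have : ∀ i : Fin n, ∑ j ∈ univ.filter (fun j => j ≠ i),
        dotProduct (X i - μ₀) (X j - μ₀) = (∑ j, g i j) - g i i := by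
      intro i
      rw [Finset.filter_ne', Finset.sum_erase_eq_sub (mem_univ i)]
    rw [Finset.sum_congr rfl fun i _ => this i, Finset.sum_sub_distrib, ← hS, ← hT]
  rw [h1, h2, h3]
  field_simp
  ring
end

section
/- Under model B with Z₁, Z₂ i.i.d. copies of Z as above, independent of each other, and Σ' = ΓᵀΓ = (σ'_{j,l}), the random variable u = Σⱼ Σₗ σ'_{j,l} Z_{1,j} Z_{2,l} satisfies E[u⁴] ≤ C·( tr(Σ'⁴) + (tr(Σ'²))² ) for a constant C depending only on Δ. -/
open MeasureTheory ProbabilityTheory Matrix ENNReal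

section FourthMomentAux

lemma fm_rot3 {M : Type*} [AddCommMonoid M] {n : ℕ} (f : Fin n → Fin n → Fin n → M) :
    (∑ b, ∑ c, ∑ d, f b c d) = ∑ d, ∑ b, ∑ c, f b c d := by
  rw [show (∑ b, ∑ c, ∑ d, f b c d) = ∑ b, ∑ d, ∑ c, f b c d from
    Finset.sum_congr rfl fun b _ => Finset.sum_comm]
  exact Finset.sum_comm

lemma fm_swap_mid {M : Type*} [AddCommMonoid M] {n : ℕ}
    (f : Fin n → Fin n → Fin n → Fin n → M) :
    (∑ a, ∑ b, ∑ c, ∑ d, f a b c d) = ∑ a, ∑ c, ∑ b, ∑ d, f a b c d :=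
  Finset.sum_congr rfl fun _ _ => Finset.sum_comm

lemma fm_sq_sum_le {ι : Type*} [Fintype ι] (x : ι → ℝ) (hx : ∀ i, 0 ≤ x i) :
    ∑ i, x i ^ 2 ≤ (∑ i, x i) ^ 2 := by
  have h : ∀ i ∈ Finset.univ, x i ^ 2 ≤ x i * ∑ j, x j := fun i _ => by
    have h1 : x i ≤ ∑ j, x j := Finset.single_le_sum (fun j _ => hx j) (Finset.mem_univ i)
    nlinarith [hx i]
  calc ∑ i, x i ^ 2 ≤ ∑ i, x i * ∑ j, x j := Finset.sum_le_sum h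
  _ = (∑ i, x i) ^ 2 := by rw [← Finset.sum_mul]; ring

variable {Ω : Type} [MeasureSpace Ω] {k : ℕ}

lemma fm_prod_eval_zero (Z : Fin k → Ω → ℝ) (ν : Fin k → ℕ)
    (h1 : ∀ j, ∫ ω, Z j ω ∂ℙ = 0) (x : Fin k) (hx : ν x = 1) :
    ∏ i, ∫ ω, (Z i ω) ^ (ν i) ∂ℙ = 0 := by
  apply Finset.prod_eq_zero (Finset.mem_univ x)
  rw [hx]; simpa using h1 x

lemma fm_prod_eval_pair [IsProbabilityMeasure (ℙ : Measure Ω)]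
    (Z : Fin k → Ω → ℝ) (ν : Fin k → ℕ)
    (h2 : ∀ j, ∫ ω, (Z j ω) ^ 2 ∂ℙ = 1) (x y : Fin k) (hxy : x ≠ y)
    (hx : ν x = 2) (hy : ν y = 2) (h0 : ∀ i, i ≠ x → i ≠ y → ν i = 0) :
    ∏ i, ∫ ω, (Z i ω) ^ (ν i) ∂ℙ = 1 := by
  rw [← Finset.prod_subset (Finset.subset_univ {x, y})
    (fun i _ hi => by
      simp only [Finset.mem_insert, Finset.mem_singleton, not_or] at hi
      rw [h0 i hi.1 hi.2]; simp)]
  rw [Finset.prod_pair hxy, hx, hy, h2 x, h2 y]; norm_num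

lemma fm_prod_eval_four [IsProbabilityMeasure (ℙ : Measure Ω)] (Δ : ℝ)
    (Z : Fin k → Ω → ℝ) (ν : Fin k → ℕ)
    (h4 : ∀ j, ∫ ω, (Z j ω) ^ 4 ∂ℙ = 3 + Δ) (x : Fin k)
    (hx : ν x = 4) (h0 : ∀ i, i ≠ x → ν i = 0) :
    ∏ i, ∫ ω, (Z i ω) ^ (ν i) ∂ℙ = 3 + Δ := by
  rw [Finset.prod_eq_single x (fun i _ hi => by rw [h0 i hi]; simp) (by simp)]
  rw [hx, h4 x]

lemma fm_moment4_eq [IsProbabilityMeasure (ℙ : Measure Ω)] (Δ : ℝ) (Z : Fin k → Ω → ℝ)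
    (h1 : ∀ j, ∫ ω, Z j ω ∂ℙ = 0) (h2 : ∀ j, ∫ ω, (Z j ω) ^ 2 ∂ℙ = 1)
    (h4 : ∀ j, ∫ ω, (Z j ω) ^ 4 ∂ℙ = 3 + Δ)
    (hfact : ∀ ν : Fin k → ℕ, (∑ j, ν j = 4) →
      ∫ ω, ∏ j, (Z j ω) ^ (ν j) ∂ℙ = ∏ j, ∫ ω, (Z j ω) ^ (ν j) ∂ℙ)
    (a b c d : Fin k) :
    ∫ ω, Z a ω * Z b ω * Z c ω * Z d ω ∂ℙ =
      (if a = b then (1:ℝ) else 0) * (if c = d then (1:ℝ) else 0)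
      + (if a = c then (1:ℝ) else 0) * (if b = d then (1:ℝ) else 0)
      + (if a = d then (1:ℝ) else 0) * (if b = c then (1:ℝ) else 0)
      + Δ * ((if a = b then (1:ℝ) else 0) * (if a = c then (1:ℝ) else 0) *
          (if a = d then (1:ℝ) else 0)) := by
  classical
  set ν : Fin k → ℕ := fun i =>
    (if a = i then 1 else 0) + (if b = i then 1 else 0) +
    (if c = i then 1 else 0) + (if d = i then 1 else 0) with hν
  have hsum : ∑ j, ν j = 4 := by
    simp [hν, Finset.sum_add_distrib, Finset.sum_ite_eq, Finset.sum_ite_eq']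
  have hpt : ∀ ω, Z a ω * Z b ω * Z c ω * Z d ω = ∏ i, (Z i ω) ^ (ν i) := by
    intro ω
    simp only [hν, pow_add, Finset.prod_mul_distrib]
    simp [pow_ite, pow_one, pow_zero, Finset.prod_ite_eq, Finset.prod_ite_eq']
  rw [show (fun ω => Z a ω * Z b ω * Z c ω * Z d ω) = fun ω => ∏ i, (Z i ω) ^ (ν i)
      from funext hpt]
  rw [hfact ν hsum]
  by_cases hab : a = b
  · subst hab
    by_cases hcd : c = d
    · subst hcd
      by_cases hac : a = c
      · subst hac
        rw [fm_prod_eval_four Δ Z ν h4 a (by simp [hν]) (fun i hi => by simp [hν, Ne.symm hi])]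
        simp; ring
      · rw [fm_prod_eval_pair Z ν h2 a c hac (by simp [hν, hac, Ne.symm hac])
          (by simp [hν, hac, Ne.symm hac])
          (fun i hia hic => by simp [hν, Ne.symm hia, Ne.symm hic])]
        simp [hac]
    · by_cases hac : a = c
      · subst hac
        rw [fm_prod_eval_zero Z ν h1 d (by simp [hν, hcd, Ne.symm hcd])]
        simp [hcd]
      · rw [fm_prod_eval_zero Z ν h1 c (by simp [hν, hac, Ne.symm hac, hcd, Ne.symm hcd])]
        simp [hcd, hac]
  · by_cases hac : a = c
    · subst hac
      by_cases hbd : b = d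
      · subst hbd
        rw [fm_prod_eval_pair Z ν h2 a b hab (by simp [hν, hab, Ne.symm hab])
          (by simp [hν, hab, Ne.symm hab])
          (fun i hia hib => by simp [hν, Ne.symm hia, Ne.symm hib])]
        simp [hab, Ne.symm hab]
      · by_cases had : a = d
        · subst had
          rw [fm_prod_eval_zero Z ν h1 b (by simp [hν, hab, Ne.symm hab, hbd, Ne.symm hbd])]
          simp [hab, Ne.symm hab]
        · rw [fm_prod_eval_zero Z ν h1 d (by simp [hν, had, Ne.symm had, hbd, Ne.symm hbd])]
          simp [hab, had, hbd]
    · by_cases had : a = d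
      · subst had
        by_cases hbc : b = c
        · subst hbc
          rw [fm_prod_eval_pair Z ν h2 a b hab (by simp [hν, hab, Ne.symm hab])
            (by simp [hν, hab, Ne.symm hab])
            (fun i hia hib => by simp [hν, Ne.symm hia, Ne.symm hib])]
          simp [hab, hac]
        · rw [fm_prod_eval_zero Z ν h1 c (by simp [hν, hac, Ne.symm hac, hbc, Ne.symm hbc])]
          simp [hab, hac, hbc]
      · rw [fm_prod_eval_zero Z ν h1 a
          (by simp [hν, hab, Ne.symm hab, hac, Ne.symm hac, had, Ne.symm had])]
        simp [hab, hac, had]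

lemma fm_integrable_prod4 {f g h i : Ω → ℝ} (hf : MemLp f 4 ℙ) (hg : MemLp g 4 ℙ)
    (hh : MemLp h 4 ℙ) (hi : MemLp i 4 ℙ) :
    Integrable (fun ω => f ω * g ω * h ω * i ω) ℙ := by
  have e1 : (1:ℝ≥0∞)/2 = 1/4 + 1/4 := by
    simp only [one_div]
    refine (ENNReal.toReal_eq_toReal_iff' (by norm_num) (by norm_num)).mp ?_
    rw [ENNReal.toReal_add (by norm_num) (by norm_num)]
    simp [ENNReal.toReal_inv]; norm_num
  have e2 : (1:ℝ≥0∞)/(4/3) = 1/4 + 1/2 := by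
    simp only [one_div]
    refine (ENNReal.toReal_eq_toReal_iff' (by norm_num) (by norm_num)).mp ?_
    rw [ENNReal.toReal_add (by norm_num) (by norm_num)]
    rw [ENNReal.toReal_inv, ENNReal.toReal_div]
    simp [ENNReal.toReal_inv]; norm_num
  have e3 : (1:ℝ≥0∞)/1 = 1/4 + 1/(4/3) := by
    simp only [one_div]
    refine (ENNReal.toReal_eq_toReal_iff' (by norm_num) (by norm_num)).mp ?_
    rw [ENNReal.toReal_add (by norm_num) (by norm_num)]
    simp [ENNReal.toReal_inv, ENNReal.toReal_div]
    norm_num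
  have m2 : MemLp (fun ω => h ω * i ω) 2 ℙ := by
    haveI : ENNReal.HolderTriple 4 4 2 := ⟨by simpa only [one_div] using e1.symm⟩
    exact MemLp.smul hi hh
  have m3 : MemLp (fun ω => g ω * (h ω * i ω)) (4/3) ℙ := by
    haveI : ENNReal.HolderTriple 4 2 (4/3) := ⟨by simpa only [one_div] using e2.symm⟩
    exact MemLp.smul m2 hg
  have m4 : MemLp (fun ω => f ω * (g ω * (h ω * i ω))) 1 ℙ := by
    haveI : ENNReal.HolderTriple 4 (4/3) 1 := ⟨by simpa only [one_div] using e3.symm⟩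
    exact MemLp.smul m3 hf
  have := memLp_one_iff_integrable.mp m4
  simpa [mul_assoc] using this

set_option maxHeartbeats 2000000 in
lemma fm_Geval (k : ℕ) (Δ : ℝ) (σ : Fin k → Fin k → ℝ) :
    (∑ a1, ∑ b1, ∑ a2, ∑ b2, ∑ a3, ∑ b3, ∑ a4, ∑ b4,
      (σ a1 b1 * σ a2 b2 * σ a3 b3 * σ a4 b4) *
      (((if a1 = a2 then (1:ℝ) else 0) * (if a3 = a4 then (1:ℝ) else 0)
        + (if a1 = a3 then (1:ℝ) else 0) * (if a2 = a4 then (1:ℝ) else 0)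
        + (if a1 = a4 then (1:ℝ) else 0) * (if a2 = a3 then (1:ℝ) else 0)
        + Δ * ((if a1 = a2 then (1:ℝ) else 0) * (if a1 = a3 then (1:ℝ) else 0) *
            (if a1 = a4 then (1:ℝ) else 0))) *
       ((if b1 = b2 then (1:ℝ) else 0) * (if b3 = b4 then (1:ℝ) else 0)
        + (if b1 = b3 then (1:ℝ) else 0) * (if b2 = b4 then (1:ℝ) else 0)
        + (if b1 = b4 then (1:ℝ) else 0) * (if b2 = b3 then (1:ℝ) else 0)
        + Δ * ((if b1 = b2 then (1:ℝ) else 0) * (if b1 = b3 then (1:ℝ) else 0) *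
            (if b1 = b4 then (1:ℝ) else 0)))))
    = 3 * (∑ p, ∑ q, σ p q ^ 2) ^ 2
      + 6 * (∑ p, ∑ q, (∑ r, σ p r * σ q r) ^ 2)
      + 3 * Δ * (∑ q, (∑ p, σ p q ^ 2) ^ 2)
      + 3 * Δ * (∑ p, (∑ q, σ p q ^ 2) ^ 2)
      + Δ ^ 2 * (∑ p, ∑ q, σ p q ^ 4) := by
  have congr4 : ∀ (f g : Fin k → Fin k → Fin k → Fin k → ℝ),
      (∀ a b c d, f a b c d = g a b c d) →
      (∑ a, ∑ b, ∑ c, ∑ d, f a b c d) = ∑ a, ∑ b, ∑ c, ∑ d, g a b c d :=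
    fun f g h => Finset.sum_congr rfl fun a _ => Finset.sum_congr rfl fun b _ =>
      Finset.sum_congr rfl fun c _ => Finset.sum_congr rfl fun d _ => h a b c d
  have congr3 : ∀ (f g : Fin k → Fin k → Fin k → ℝ),
      (∀ a b c, f a b c = g a b c) →
      (∑ a, ∑ b, ∑ c, f a b c) = ∑ a, ∑ b, ∑ c, g a b c :=
    fun f g h => Finset.sum_congr rfl fun a _ => Finset.sum_congr rfl fun b _ =>
      Finset.sum_congr rfl fun c _ => h a b c
  have congr2 : ∀ (f g : Fin k → Fin k → ℝ),
      (∀ a b, f a b = g a b) →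
      (∑ a, ∑ b, f a b) = ∑ a, ∑ b, g a b :=
    fun f g h => Finset.sum_congr rfl fun a _ => Finset.sum_congr rfl fun b _ => h a b
  simp only [mul_add, add_mul, Finset.sum_add_distrib, mul_ite, mul_one, mul_zero, ite_mul,
    zero_mul, one_mul, Finset.sum_ite_irrel, Finset.sum_const_zero,
    Finset.sum_ite_eq, Finset.sum_ite_eq', Finset.mem_univ, if_true]
  have h03 : (∑ x : Fin k, ∑ x1 : Fin k, ∑ x2 : Fin k, ∑ x3 : Fin k,
      σ x x1 * σ x2 x1 * σ x2 x3 * σ x x3)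
      = ∑ x, ∑ y, ∑ z, ∑ w, σ x y * σ z y * σ x w * σ z w :=
    congr4 _ _ fun a b c d => by ring
  have h05 : (∑ x : Fin k, ∑ x1 : Fin k, ∑ x2 : Fin k, ∑ x3 : Fin k,
      σ x x1 * σ x x2 * σ x3 x1 * σ x3 x2)
      = ∑ x, ∑ y, ∑ z, ∑ w, σ x y * σ z y * σ x w * σ z w := by
    rw [show (∑ x : Fin k, ∑ x1 : Fin k, ∑ x2 : Fin k, ∑ x3 : Fin k,
        σ x x1 * σ x x2 * σ x3 x1 * σ x3 x2)
        = ∑ x : Fin k, ∑ x3 : Fin k, ∑ x1 : Fin k, ∑ x2 : Fin k,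
          σ x x1 * σ x x2 * σ x3 x1 * σ x3 x2 from
      Finset.sum_congr rfl fun x _ => fm_rot3 (fun b c d => σ x b * σ x c * σ d b * σ d c)]
    rw [fm_swap_mid (fun p q r s => σ p r * σ p s * σ q r * σ q s)]
    exact congr4 _ _ fun a b c d => by ring
  have h06 : (∑ x : Fin k, ∑ x1 : Fin k, ∑ x2 : Fin k, ∑ x3 : Fin k,
      σ x x1 * σ x2 x3 * σ x x1 * σ x2 x3)
      = ∑ x, ∑ y, ∑ z, ∑ w, σ x y * σ x y * σ z w * σ z w :=
    congr4 _ _ fun a b c d => by ring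
  have h07 : (∑ x : Fin k, ∑ x1 : Fin k, ∑ x2 : Fin k, ∑ x3 : Fin k,
      σ x x1 * σ x2 x3 * σ x2 x1 * σ x x3)
      = ∑ x, ∑ y, ∑ z, ∑ w, σ x y * σ z y * σ x w * σ z w :=
    congr4 _ _ fun a b c d => by ring
  have h08 : (∑ x : Fin k, ∑ x1 : Fin k, ∑ x2 : Fin k,
      σ x x1 * σ x x2 * σ x x1 * σ x x2 * Δ)
      = ∑ x, ∑ y, ∑ z, σ x y * σ x y * σ x z * σ x z * Δ :=
    congr3 _ _ fun a b c => by ring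
  have h09 : (∑ x : Fin k, ∑ x1 : Fin k, ∑ x2 : Fin k, ∑ x3 : Fin k,
      σ x x1 * σ x x2 * σ x3 x2 * σ x3 x1)
      = ∑ x, ∑ y, ∑ z, ∑ w, σ x y * σ z y * σ x w * σ z w := by
    rw [show (∑ x : Fin k, ∑ x1 : Fin k, ∑ x2 : Fin k, ∑ x3 : Fin k,
        σ x x1 * σ x x2 * σ x3 x2 * σ x3 x1)
        = ∑ x : Fin k, ∑ x3 : Fin k, ∑ x1 : Fin k, ∑ x2 : Fin k,
          σ x x1 * σ x x2 * σ x3 x2 * σ x3 x1 from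
      Finset.sum_congr rfl fun x _ => fm_rot3 (fun b c d => σ x b * σ x c * σ d c * σ d b)]
    rw [fm_swap_mid (fun p q r s => σ p r * σ p s * σ q s * σ q r)]
    exact congr4 _ _ fun a b c d => by ring
  have h10 : (∑ x : Fin k, ∑ x1 : Fin k, ∑ x2 : Fin k, ∑ x3 : Fin k,
      σ x x1 * σ x2 x3 * σ x x3 * σ x2 x1)
      = ∑ x, ∑ y, ∑ z, ∑ w, σ x y * σ z y * σ x w * σ z w :=
    congr4 _ _ fun a b c d => by ring
  have h11 : (∑ x : Fin k, ∑ x1 : Fin k, ∑ x2 : Fin k, ∑ x3 : Fin k,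
      σ x x1 * σ x2 x3 * σ x2 x3 * σ x x1)
      = ∑ x, ∑ y, ∑ z, ∑ w, σ x y * σ x y * σ z w * σ z w :=
    congr4 _ _ fun a b c d => by ring
  have h12 : (∑ x : Fin k, ∑ x1 : Fin k, ∑ x2 : Fin k,
      σ x x1 * σ x x2 * σ x x2 * σ x x1 * Δ)
      = ∑ x, ∑ y, ∑ z, σ x y * σ x y * σ x z * σ x z * Δ :=
    congr3 _ _ fun a b c => by ring
  have h14 : (∑ x : Fin k, ∑ x1 : Fin k, ∑ x2 : Fin k,
      σ x x1 * σ x2 x1 * σ x x1 * σ x2 x1 * Δ)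
      = ∑ x, ∑ y, ∑ z, σ x y * σ x y * σ z y * σ z y * Δ :=
    congr3 _ _ fun a b c => by ring
  have h15 : (∑ x : Fin k, ∑ x1 : Fin k, ∑ x2 : Fin k,
      σ x x1 * σ x2 x1 * σ x2 x1 * σ x x1 * Δ)
      = ∑ x, ∑ y, ∑ z, σ x y * σ x y * σ z y * σ z y * Δ :=
    congr3 _ _ fun a b c => by ring
  rw [h03, h05, h06, h07, h08, h09, h10, h11, h12, h14, h15]
  have iP : (∑ x : Fin k, ∑ y : Fin k, ∑ z : Fin k, ∑ w : Fin k,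
      σ x y * σ x y * σ z w * σ z w) = (∑ p, ∑ q, σ p q ^ 2) ^ 2 := by
    rw [fm_swap_mid (fun x y z w => σ x y * σ x y * σ z w * σ z w)]
    simp only [pow_two, Finset.sum_mul_sum]
    exact congr4 _ _ fun a b c d => by ring
  have iT : (∑ x : Fin k, ∑ y : Fin k, ∑ z : Fin k, ∑ w : Fin k,
      σ x y * σ z y * σ x w * σ z w) = ∑ p, ∑ q, (∑ r, σ p r * σ q r) ^ 2 := by
    rw [fm_swap_mid (fun x y z w => σ x y * σ z y * σ x w * σ z w)]
    simp only [pow_two, Finset.sum_mul_sum]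
    exact congr4 _ _ fun a b c d => by ring
  have iQ2 : (∑ x : Fin k, ∑ y : Fin k, ∑ z : Fin k,
      σ x y * σ x y * σ x z * σ x z * Δ) = Δ * (∑ p, (∑ q, σ p q ^ 2) ^ 2) := by
    simp only [pow_two, Finset.sum_mul_sum, Finset.mul_sum, Finset.sum_mul]
    exact congr3 _ _ fun a b c => by ring
  have iQ1 : (∑ x : Fin k, ∑ y : Fin k, ∑ z : Fin k,
      σ x y * σ x y * σ z y * σ z y * Δ) = Δ * (∑ q, (∑ p, σ p q ^ 2) ^ 2) := by
    rw [show (∑ x : Fin k, ∑ y : Fin k, ∑ z : Fin k,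
        σ x y * σ x y * σ z y * σ z y * Δ)
        = ∑ y : Fin k, ∑ x : Fin k, ∑ z : Fin k,
          σ x y * σ x y * σ z y * σ z y * Δ from Finset.sum_comm]
    simp only [pow_two, Finset.sum_mul_sum, Finset.mul_sum, Finset.sum_mul]
    exact congr3 _ _ fun a b c => by ring
  have iR : (∑ x : Fin k, ∑ y : Fin k,
      σ x y * σ x y * σ x y * σ x y * (Δ * Δ)) = Δ ^ 2 * (∑ p, ∑ q, σ p q ^ 4) := by
    simp only [Finset.mul_sum]
    exact congr2 _ _ fun a b => by ring
  rw [iP, iT, iQ2, iQ1, iR]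
  ring

end FourthMomentAux
set_option maxHeartbeats 2000000 in
theorem fourth_moment_u_model_B (Δ : ℝ) :
    ∃ C : ℝ, ∀ (d k : ℕ) (Ω : Type) (_ : MeasureSpace Ω),
      IsProbabilityMeasure (ℙ : Measure Ω) →
      ∀ (Z₁ Z₂ : Fin k → Ω → ℝ) (Γ : Matrix (Fin d) (Fin k) ℝ),
        IndepFun (fun ω j => Z₁ j ω) (fun ω j => Z₂ j ω) ℙ →
        (∀ j, MemLp (Z₁ j) 4 ℙ) → (∀ j, MemLp (Z₂ j) 4 ℙ) →
        (∀ j, ∫ ω, Z₁ j ω ∂ℙ = 0) → (∀ j, ∫ ω, Z₂ j ω ∂ℙ = 0) →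
        (∀ j, ∫ ω, (Z₁ j ω) ^ 2 ∂ℙ = 1) → (∀ j, ∫ ω, (Z₂ j ω) ^ 2 ∂ℙ = 1) →
        (∀ j, ∫ ω, (Z₁ j ω) ^ 4 ∂ℙ = 3 + Δ) → (∀ j, ∫ ω, (Z₂ j ω) ^ 4 ∂ℙ = 3 + Δ) →
        (∀ ν : Fin k → ℕ, (∑ j, ν j = 4) →
          ∫ ω, ∏ j, (Z₁ j ω) ^ (ν j) ∂ℙ = ∏ j, ∫ ω, (Z₁ j ω) ^ (ν j) ∂ℙ) →
        (∀ ν : Fin k → ℕ, (∑ j, ν j = 4) →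
          ∫ ω, ∏ j, (Z₂ j ω) ^ (ν j) ∂ℙ = ∏ j, ∫ ω, (Z₂ j ω) ^ (ν j) ∂ℙ) →
        (∫ ω, (∑ j, ∑ l, (Γᵀ * Γ) j l * Z₁ j ω * Z₂ l ω) ^ 4 ∂ℙ)
          ≤ C * (Matrix.trace ((Γᵀ * Γ) ^ 4) + (Matrix.trace ((Γᵀ * Γ) ^ 2)) ^ 2) := by
  classical
  refine ⟨9 + 6 * |Δ| + Δ ^ 2, ?_⟩
  intro d k Ω _ hPM Z₁ Z₂ Γ hIndep hL1 hL2 hm1' hm2' hv1 hv2 hf1 hf2 hfact1 hfact2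
  haveI := hPM
  set S : Matrix (Fin k) (Fin k) ℝ := Γᵀ * Γ with hSdef
  have hsymm : ∀ p q, S p q = S q p := by
    intro p q
    simp only [hSdef, Matrix.mul_apply, Matrix.transpose_apply]
    exact Finset.sum_congr rfl fun i _ => mul_comm _ _
  -- Part I: expansion
  have hint : ∀ q1 q2 q3 q4 : Fin k × Fin k,
      Integrable (fun ω => (Z₁ q1.1 ω * Z₁ q2.1 ω * Z₁ q3.1 ω * Z₁ q4.1 ω) *
        (Z₂ q1.2 ω * Z₂ q2.2 ω * Z₂ q3.2 ω * Z₂ q4.2 ω)) ℙ := by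
    intro q1 q2 q3 q4
    have hφ : Measurable fun v : Fin k → ℝ => v q1.1 * v q2.1 * v q3.1 * v q4.1 :=
      (((measurable_pi_apply q1.1).mul (measurable_pi_apply q2.1)).mul
        (measurable_pi_apply q3.1)).mul (measurable_pi_apply q4.1)
    have hψ : Measurable fun v : Fin k → ℝ => v q1.2 * v q2.2 * v q3.2 * v q4.2 :=
      (((measurable_pi_apply q1.2).mul (measurable_pi_apply q2.2)).mul
        (measurable_pi_apply q3.2)).mul (measurable_pi_apply q4.2)
    exact (hIndep.comp hφ hψ).integrable_mul
      (fm_integrable_prod4 (hL1 _) (hL1 _) (hL1 _) (hL1 _))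
      (fm_integrable_prod4 (hL2 _) (hL2 _) (hL2 _) (hL2 _))
  have key : (∫ ω, (∑ j, ∑ l, S j l * Z₁ j ω * Z₂ l ω) ^ 4 ∂ℙ)
      = ∑ p1 : Fin k × Fin k, ∑ p2 : Fin k × Fin k, ∑ p3 : Fin k × Fin k, ∑ p4 : Fin k × Fin k,
          (S p1.1 p1.2 * S p2.1 p2.2 * S p3.1 p3.2 * S p4.1 p4.2) *
          ((∫ ω, Z₁ p1.1 ω * Z₁ p2.1 ω * Z₁ p3.1 ω * Z₁ p4.1 ω ∂ℙ) *
           (∫ ω, Z₂ p1.2 ω * Z₂ p2.2 ω * Z₂ p3.2 ω * Z₂ p4.2 ω ∂ℙ)) := by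
    have expand : ∀ ω, (∑ j, ∑ l, S j l * Z₁ j ω * Z₂ l ω) ^ 4
        = ∑ p1 : Fin k × Fin k, ∑ p2 : Fin k × Fin k, ∑ p3 : Fin k × Fin k, ∑ p4 : Fin k × Fin k,
          (S p1.1 p1.2 * S p2.1 p2.2 * S p3.1 p3.2 * S p4.1 p4.2) *
          ((Z₁ p1.1 ω * Z₁ p2.1 ω * Z₁ p3.1 ω * Z₁ p4.1 ω) *
           (Z₂ p1.2 ω * Z₂ p2.2 ω * Z₂ p3.2 ω * Z₂ p4.2 ω)) := by
      intro ω
      rw [show (∑ j, ∑ l, S j l * Z₁ j ω * Z₂ l ω)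
          = ∑ p : Fin k × Fin k, S p.1 p.2 * Z₁ p.1 ω * Z₂ p.2 ω from
        (Fintype.sum_prod_type (f := fun p : Fin k × Fin k =>
          S p.1 p.2 * Z₁ p.1 ω * Z₂ p.2 ω)).symm]
      rw [show ∀ x : ℝ, x ^ 4 = x * x * x * x from fun x => by ring]
      simp only [Finset.sum_mul, Finset.mul_sum]
      refine Finset.sum_congr rfl fun p1 _ => Finset.sum_congr rfl fun p2 _ =>
        Finset.sum_congr rfl fun p3 _ => Finset.sum_congr rfl fun p4 _ => by ring
    rw [show (fun ω => (∑ j, ∑ l, S j l * Z₁ j ω * Z₂ l ω) ^ 4) = fun ω =>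
        ∑ p1 : Fin k × Fin k, ∑ p2 : Fin k × Fin k, ∑ p3 : Fin k × Fin k, ∑ p4 : Fin k × Fin k,
          (S p1.1 p1.2 * S p2.1 p2.2 * S p3.1 p3.2 * S p4.1 p4.2) *
          ((Z₁ p1.1 ω * Z₁ p2.1 ω * Z₁ p3.1 ω * Z₁ p4.1 ω) *
           (Z₂ p1.2 ω * Z₂ p2.2 ω * Z₂ p3.2 ω * Z₂ p4.2 ω)) from funext expand]
    rw [integral_finset_sum _ (fun p1 _ => (integrable_finset_sum _ (fun p2 _ =>
      integrable_finset_sum _ (fun p3 _ => integrable_finset_sum _ (fun p4 _ =>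
        ((hint p1 p2 p3 p4).const_mul _))))))]
    refine Finset.sum_congr rfl fun p1 _ => ?_
    rw [integral_finset_sum _ (fun p2 _ => integrable_finset_sum _ (fun p3 _ =>
      integrable_finset_sum _ (fun p4 _ => ((hint p1 p2 p3 p4).const_mul _))))]
    refine Finset.sum_congr rfl fun p2 _ => ?_
    rw [integral_finset_sum _ (fun p3 _ => integrable_finset_sum _ (fun p4 _ =>
      ((hint p1 p2 p3 p4).const_mul _)))]
    refine Finset.sum_congr rfl fun p3 _ => ?_
    rw [integral_finset_sum _ (fun p4 _ => ((hint p1 p2 p3 p4).const_mul _))]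
    refine Finset.sum_congr rfl fun p4 _ => ?_
    rw [integral_const_mul]
    congr 1
    have hφ : Measurable fun v : Fin k → ℝ => v p1.1 * v p2.1 * v p3.1 * v p4.1 :=
      (((measurable_pi_apply p1.1).mul (measurable_pi_apply p2.1)).mul
        (measurable_pi_apply p3.1)).mul (measurable_pi_apply p4.1)
    have hψ : Measurable fun v : Fin k → ℝ => v p1.2 * v p2.2 * v p3.2 * v p4.2 :=
      (((measurable_pi_apply p1.2).mul (measurable_pi_apply p2.2)).mul
        (measurable_pi_apply p3.2)).mul (measurable_pi_apply p4.2)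
    exact (hIndep.comp hφ hψ).integral_mul_eq_mul_integral
      (fm_integrable_prod4 (hL1 _) (hL1 _) (hL1 _) (hL1 _)).aestronglyMeasurable
      (fm_integrable_prod4 (hL2 _) (hL2 _) (hL2 _) (hL2 _)).aestronglyMeasurable
  -- Part II: replace integrals by moment values; Part III: evaluate
  have hM1 := fm_moment4_eq Δ Z₁ hm1' hv1 hf1 hfact1
  have hM2 := fm_moment4_eq Δ Z₂ hm2' hv2 hf2 hfact2
  rw [key]
  simp only [Fintype.sum_prod_type]
  simp only [hM1, hM2]
  rw [fm_Geval k Δ (fun p q => S p q)]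
  -- trace identities
  have htr2 : Matrix.trace (S ^ 2) = ∑ p, ∑ q, S p q ^ 2 := by
    simp only [pow_two, Matrix.trace, Matrix.diag, Matrix.mul_apply]
    exact Finset.sum_congr rfl fun p _ => Finset.sum_congr rfl fun q _ => by
      rw [hsymm q p]; try ring
  have htr4 : Matrix.trace (S ^ 4) = ∑ p, ∑ q, (∑ r, S p r * S q r) ^ 2 := by
    rw [show S ^ 4 = (S ^ 2) * (S ^ 2) from by rw [← pow_add]]
    simp only [Matrix.trace, Matrix.diag, Matrix.mul_apply, pow_two]
    refine Finset.sum_congr rfl fun p _ => Finset.sum_congr rfl fun q _ => ?_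
    have e1 : (∑ r, S p r * S r q) = ∑ r, S p r * S q r :=
      Finset.sum_congr rfl fun r _ => by rw [hsymm r q]
    have e2 : (∑ r, S q r * S r p) = ∑ r, S p r * S q r :=
      Finset.sum_congr rfl fun r _ => by rw [hsymm r p]; try ring
    rw [e1, e2]
  rw [htr2, htr4]
  -- bounds
  set P : ℝ := ∑ p, ∑ q, S p q ^ 2 with hP
  set T : ℝ := ∑ p, ∑ q, (∑ r, S p r * S q r) ^ 2 with hT
  have hTnn : 0 ≤ T := Finset.sum_nonneg fun p _ => Finset.sum_nonneg fun q _ => sq_nonneg _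
  have hQ2nn : 0 ≤ ∑ p, (∑ q, S p q ^ 2) ^ 2 :=
    Finset.sum_nonneg fun p _ => sq_nonneg _
  have hQ1nn : 0 ≤ ∑ q, (∑ p, S p q ^ 2) ^ 2 :=
    Finset.sum_nonneg fun q _ => sq_nonneg _
  have hQ2le : (∑ p, (∑ q, S p q ^ 2) ^ 2) ≤ P ^ 2 := by
    rw [hP]
    exact fm_sq_sum_le (fun p => ∑ q, S p q ^ 2)
      (fun p => Finset.sum_nonneg fun q _ => sq_nonneg _)
  have hQ1le : (∑ q, (∑ p, S p q ^ 2) ^ 2) ≤ P ^ 2 := by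
    have := fm_sq_sum_le (fun q => ∑ p, S p q ^ 2)
      (fun q => Finset.sum_nonneg fun p _ => sq_nonneg _)
    calc (∑ q, (∑ p, S p q ^ 2) ^ 2) ≤ (∑ q, ∑ p, S p q ^ 2) ^ 2 := this
    _ = P ^ 2 := by rw [hP, Finset.sum_comm]
  have hRle : (∑ p, ∑ q, S p q ^ 4) ≤ P ^ 2 := by
    have h1 : (∑ p, ∑ q, S p q ^ 4) ≤ ∑ p, (∑ q, S p q ^ 2) ^ 2 := by
      refine Finset.sum_le_sum fun p _ => ?_
      have := fm_sq_sum_le (fun q => S p q ^ 2) (fun q => sq_nonneg _)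
      calc (∑ q, S p q ^ 4) = ∑ q, (S p q ^ 2) ^ 2 :=
          Finset.sum_congr rfl fun q _ => by ring
      _ ≤ (∑ q, S p q ^ 2) ^ 2 := this
    exact h1.trans hQ2le
  have habs0 : (0:ℝ) ≤ |Δ| := abs_nonneg Δ
  have habs1 : Δ ≤ |Δ| := le_abs_self Δ
  have hP2nn : (0:ℝ) ≤ P ^ 2 := sq_nonneg _
  have hA := mul_nonneg habs0 hTnn
  have hB := mul_nonneg (sq_nonneg Δ) hTnn
  have hC := mul_nonneg habs0 (sub_nonneg.2 hQ1le)
  have hD := mul_nonneg habs0 (sub_nonneg.2 hQ2le)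
  have hE := mul_nonneg (sq_nonneg Δ) (sub_nonneg.2 hRle)
  have hF := mul_nonneg (sub_nonneg.2 habs1) hQ1nn
  have hG := mul_nonneg (sub_nonneg.2 habs1) hQ2nn
  nlinarith [hA, hB, hC, hD, hE, hF, hG, hTnn, hP2nn]
end
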